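/- arXiv:1210.1766 — 7 statements merged into one kernel-verified Lean document; each statement's English description precedes it below -/
import Mathlib

section
/- Let (M, 𝓑) be a measurable space, μ a probability measure on M (the prior), and L : M → [0,∞) a measurable likelihood function with 0 < Z := ∫ L dμ < ∞. Define the Bayesian posterior ν := Z⁻¹ • (μ.withDensity L). Then for every probability measure q on M with q ≪ μ such that log L is q-integrable and the log-likelihood ratio log(dq/dμ) is q-integrable, one has q ≪ ν and KL(q ‖ ν) = KL(q ‖ μ) − ∫ log L dq + log Z, where KL(q ‖ p) denotes ∫ log(dq/dp) dq. -/
open MeasureTheory Real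

/-- `klDivR q p = ∫ log(dq/dp) dq`, the Kullback–Leibler divergence (real-valued),
meaningful when `q ≪ p` and the log-likelihood ratio is `q`-integrable. -/
noncomputable def klDivR {M : Type*} [MeasurableSpace M] (q p : Measure M) : ℝ :=
  ∫ m, Real.log ((q.rnDeriv p) m).toReal ∂q

/-- For a prior `μ`, a nonnegative likelihood `L` with `0 < Z = ∫ L dμ < ∞`, and the
Bayesian posterior `ν = Z⁻¹ • μ.withDensity L`: every probability measure `q ≪ μ`
(with `L > 0` holding `q`-a.e. so that `log L` is well defined, `log L` `q`-integrable
and `log(dq/dμ)` `q`-integrable) satisfies `q ≪ ν` and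
`KL(q‖ν) = KL(q‖μ) − ∫ log L dq + log Z`. -/
theorem stmt0 {M : Type*} [MeasurableSpace M] (μ : Measure M) [IsProbabilityMeasure μ]
    (L : M → ℝ) (hLmeas : Measurable L) (hL0 : ∀ m, 0 ≤ L m)
    (hLint : Integrable L μ) (hZpos : 0 < ∫ m, L m ∂μ)
    (q : Measure M) [IsProbabilityMeasure q] (hqμ : q ≪ μ)
    (hLq : ∀ᵐ m ∂q, 0 < L m)
    (hlogL : Integrable (fun m => Real.log (L m)) q)
    (hllr : Integrable (fun m => Real.log ((q.rnDeriv μ) m).toReal) q) :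
    q ≪ (ENNReal.ofReal (∫ m, L m ∂μ))⁻¹ •
          μ.withDensity (fun m => ENNReal.ofReal (L m)) ∧
    klDivR q ((ENNReal.ofReal (∫ m, L m ∂μ))⁻¹ •
          μ.withDensity (fun m => ENNReal.ofReal (L m)))
      = klDivR q μ - (∫ m, Real.log (L m) ∂q) + Real.log (∫ m, L m ∂μ) := by
  set Z : ℝ := ∫ m, L m ∂μ with hZ
  set c : ENNReal := ENNReal.ofReal Z with hc
  have hc0 : c ≠ 0 := by simpa [hc, ENNReal.ofReal_eq_zero, not_le] using hZpos
  have hcT : c ≠ ⊤ := ENNReal.ofReal_ne_top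
  have hcinvT : c⁻¹ ≠ ⊤ := by simp [hc0]
  set f : M → ENNReal := fun m => ENNReal.ofReal (L m) with hf
  have hfmeas : Measurable f := hLmeas.ennreal_ofReal
  set ν : Measure M := c⁻¹ • μ.withDensity f with hν
  have hν_eq : ν = μ.withDensity (fun m => c⁻¹ * f m) := by
    rw [hν, ← withDensity_smul' c⁻¹ f hcinvT]
    rfl
  haveI hfinwd : IsFiniteMeasure (μ.withDensity f) := by
    constructor
    rw [withDensity_apply _ MeasurableSet.univ, setLIntegral_univ]
    calc ∫⁻ m, f m ∂μ ≤ ∫⁻ m, ‖L m‖₊ ∂μ := by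
          refine lintegral_mono fun m => ?_
          rw [hf]
          simp only [← Real.enorm_eq_ofReal_abs]
          exact ENNReal.ofReal_le_ofReal (le_abs_self _) |>.trans
            (by rw [← Real.enorm_eq_ofReal_abs]; exact le_rfl)
      _ < ⊤ := hLint.hasFiniteIntegral
  haveI hfinν : IsFiniteMeasure ν := by
    constructor
    rw [hν, Measure.smul_apply, smul_eq_mul]
    exact ENNReal.mul_lt_top hcinvT.lt_top (measure_lt_top _ _)
  -- q ≪ ν
  have hqν : q ≪ ν := by
    intro s hs
    have hs' : μ.withDensity f s = 0 := by
      have := hs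
      rw [hν, Measure.smul_apply, smul_eq_mul, mul_eq_zero] at this
      rcases this with h | h
      · exact absurd h (by simp [ENNReal.inv_eq_zero, hcT])
      · exact h
    -- measure-theoretic: a.e. μ, x ∈ s → f x = 0
    have hmeas_s : MeasurableSet (toMeasurable (μ.withDensity f) s) :=
      measurableSet_toMeasurable _ _
    have hs'' : μ.withDensity f (toMeasurable (μ.withDensity f) s) = 0 := by
      rwa [measure_toMeasurable]
    rw [withDensity_apply_eq_zero hfmeas] at hs''
    have hq0 : q ({x | f x ≠ 0} ∩ toMeasurable (μ.withDensity f) s) = 0 := hqμ hs''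
    have hqsub : q s ≤ q ({x | f x ≠ 0} ∩ toMeasurable (μ.withDensity f) s)
        + q {x | f x = 0} := by
      refine le_trans (measure_mono ?_) (measure_union_le _ _)
      intro x hx
      by_cases hfx : f x = 0
      · exact Or.inr hfx
      · exact Or.inl ⟨hfx, subset_toMeasurable _ _ hx⟩
    have hqf0 : q {x | f x = 0} = 0 := by
      have : ∀ᵐ x ∂q, f x ≠ 0 := by
        filter_upwards [hLq] with x hx
        simp [hf, ENNReal.ofReal_eq_zero, not_le, hx]
      simpa [ae_iff] using this
    have := hqsub
    rw [hq0, hqf0, add_zero] at this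
    exact le_antisymm this zero_le
  refine ⟨hqν, ?_⟩
  -- pointwise identity for rnDeriv
  have hνμ_deriv : ν.rnDeriv μ =ᵐ[μ] (fun m => c⁻¹ * f m) := by
    rw [hν_eq]
    exact Measure.rnDeriv_withDensity μ (hfmeas.const_mul _)
  have hchain : q.rnDeriv ν * ν.rnDeriv μ =ᵐ[μ] q.rnDeriv μ :=
    Measure.rnDeriv_mul_rnDeriv hqν
  have hqμ_pos : ∀ᵐ m ∂q, 0 < q.rnDeriv μ m := Measure.rnDeriv_pos hqμ
  have hqμ_lt : ∀ᵐ m ∂q, q.rnDeriv μ m < ⊤ := hqμ (Measure.rnDeriv_lt_top q μ)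
  have hqν_lt : ∀ᵐ m ∂q, q.rnDeriv ν m < ⊤ := hqν (Measure.rnDeriv_lt_top q ν)
  have key : ∀ᵐ m ∂q, Real.log (q.rnDeriv ν m).toReal
      = Real.log (q.rnDeriv μ m).toReal - Real.log (L m) + Real.log Z := by
    filter_upwards [hqμ hchain, hqμ hνμ_deriv, hqμ_pos, hqμ_lt, hqν_lt, hLq] with m
      h1 h2 h3 h4 h5 h6
    have heq : q.rnDeriv ν m * (c⁻¹ * f m) = q.rnDeriv μ m := by
      rw [← h2]; exact h1
    have hfm0 : f m ≠ 0 := by simp [hf, ENNReal.ofReal_eq_zero, not_le, h6]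
    have hfmT : f m ≠ ⊤ := ENNReal.ofReal_ne_top
    have hcinv0 : c⁻¹ ≠ 0 := by simp [hcT]
    -- toReal computations
    have hreal : (q.rnDeriv ν m).toReal * (Z⁻¹ * L m) = (q.rnDeriv μ m).toReal := by
      have := congrArg ENNReal.toReal heq
      rw [ENNReal.toReal_mul, ENNReal.toReal_mul] at this
      rw [← this]
      congr 1
      congr 1
      · rw [ENNReal.toReal_inv, hc, ENNReal.toReal_ofReal hZpos.le]
      · rw [hf, ENNReal.toReal_ofReal (hL0 m)]
    have hqν0 : q.rnDeriv ν m ≠ 0 := by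
      intro h0
      rw [h0, zero_mul] at heq
      exact h3.ne' heq.symm
    have hqν_pos : 0 < (q.rnDeriv ν m).toReal := ENNReal.toReal_pos hqν0 h5.ne
    have hZL : 0 < Z⁻¹ * L m := mul_pos (inv_pos.2 hZpos) h6
    have := congrArg Real.log hreal
    rw [Real.log_mul hqν_pos.ne' hZL.ne', Real.log_mul (inv_pos.2 hZpos).ne' h6.ne',
      Real.log_inv] at this
    linarith
  -- integrate
  have hsub : Integrable (fun m => Real.log ((q.rnDeriv μ) m).toReal
      - Real.log (L m)) q := hllr.sub hlogL
  calc klDivR q ν = ∫ m, (Real.log ((q.rnDeriv μ) m).toReal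
        - Real.log (L m) + Real.log Z) ∂q := integral_congr_ae key
    _ = klDivR q μ - (∫ m, Real.log (L m) ∂q) + Real.log Z := by
        rw [integral_add hsub (integrable_const _),
          integral_sub hllr hlogL, integral_const]
        simp [klDivR]
end

section
/- Let (M, 𝓑) be a measurable space, μ a probability measure on M (the prior), and L : M → [0,∞) a measurable likelihood function with 0 < Z := ∫ L dμ < ∞, and let ν := Z⁻¹ • (μ.withDensity L) be the Bayesian posterior. Then for every probability measure q on M with q ≪ μ such that log L is q-integrable and log(dq/dμ) is q-integrable, KL(q ‖ μ) − ∫ log L dq ≥ −log Z, with equality if and only if q = ν. In other words, the Bayesian posterior given by Bayes' rule is the unique solution of the optimization problem: minimize KL(q ‖ μ) − ∫ log L dq over all such probability measures q. -/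
open MeasureTheory Real

open scoped ENNReal

/-- Gibbs' inequality: for probability measures `q ≪ ν` with integrable log-likelihood
ratio, `∫ llr q ν dq ≥ 0`, with equality iff `q = ν`. -/
lemma gibbs_aux {M : Type*} [MeasurableSpace M] (q ν : Measure M)
    [IsProbabilityMeasure q] [IsProbabilityMeasure ν] (hqν : q ≪ ν)
    (hint : Integrable (llr q ν) q) :
    0 ≤ ∫ m, llr q ν m ∂q ∧ (∫ m, llr q ν m ∂q = 0 ↔ q = ν) := by
  set t : M → ℝ := fun m => (ν.rnDeriv q m).toReal with ht_def
  have ht_int : Integrable t q := Measure.integrable_toReal_rnDeriv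
  have hae : ∀ᵐ m ∂q, 0 < t m ∧ llr q ν m = - Real.log (t m) := by
    filter_upwards [Measure.inv_rnDeriv hqν, Measure.rnDeriv_pos hqν,
      hqν.ae_le (Measure.rnDeriv_lt_top q ν)] with m h1 h2 h3
    have hrt : (q.rnDeriv ν m).toReal ≠ 0 := by
      simp [ENNReal.toReal_eq_zero_iff, h2.ne', h3.ne]
    have ht : t m = ((q.rnDeriv ν m).toReal)⁻¹ := by
      rw [ht_def]
      simp only
      rw [← h1, Pi.inv_apply, ENNReal.toReal_inv]
    constructor
    · rw [ht]
      exact inv_pos.mpr (lt_of_le_of_ne ENNReal.toReal_nonneg (Ne.symm hrt))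
    · rw [ht, Real.log_inv, neg_neg, llr]
  have hlog_int : Integrable (fun m => Real.log (t m)) q := by
    refine hint.neg.congr ?_
    filter_upwards [hae] with m hm
    rw [Pi.neg_apply, hm.2, neg_neg]
  have hD_int : Integrable (fun m => t m - 1 - Real.log (t m)) q :=
    (ht_int.sub (integrable_const 1)).sub hlog_int
  have hD_nonneg : 0 ≤ᵐ[q] fun m => t m - 1 - Real.log (t m) := by
    filter_upwards [hae] with m hm
    have := Real.log_le_sub_one_of_pos hm.1
    simp only [Pi.zero_apply]
    linarith
  have hlog_eq : ∫ m, Real.log (t m) ∂q = - ∫ m, llr q ν m ∂q := by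
    rw [← integral_neg]
    refine integral_congr_ae ?_
    filter_upwards [hae] with m hm
    rw [hm.2, neg_neg]
  have ht_le : ∫ m, t m ∂q ≤ 1 := by
    have h := Measure.setIntegral_toReal_rnDeriv_le (μ := ν) (ν := q)
      (s := Set.univ) (measure_ne_top ν _)
    simpa [measure_univ] using h
  have hD_eq : ∫ m, (t m - 1 - Real.log (t m)) ∂q
      = ∫ m, t m ∂q - 1 + ∫ m, llr q ν m ∂q := by
    have e1 : ∫ m, (t m - 1 - Real.log (t m)) ∂q
        = (∫ m, (t m - 1) ∂q) - ∫ m, Real.log (t m) ∂q :=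
      integral_sub (ht_int.sub (integrable_const 1)) hlog_int
    have e2 : ∫ m, (t m - 1) ∂q = (∫ m, t m ∂q) - ∫ (_ : M), (1:ℝ) ∂q :=
      integral_sub ht_int (integrable_const 1)
    have e3 : ∫ (_ : M), (1:ℝ) ∂q = 1 := by simp
    rw [e1, e2, e3, hlog_eq]
    ring
  have hD_nonneg' : 0 ≤ ∫ m, (t m - 1 - Real.log (t m)) ∂q :=
    integral_nonneg_of_ae hD_nonneg
  constructor
  · linarith [hD_nonneg', hD_eq, ht_le]
  constructor
  · intro h0
    have hD0 : ∫ m, (t m - 1 - Real.log (t m)) ∂q = 0 := by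
      linarith [hD_nonneg', hD_eq, ht_le]
    have hDae : (fun m => t m - 1 - Real.log (t m)) =ᵐ[q] 0 :=
      (integral_eq_zero_iff_of_nonneg_ae hD_nonneg hD_int).mp hD0
    have ht1 : ν.rnDeriv q =ᵐ[q] 1 := by
      filter_upwards [hDae, hae] with m hD hm
      have ht1 : t m = 1 := by
        by_contra hne
        have := Real.log_lt_sub_one_of_pos hm.1 hne
        simp only [Pi.zero_apply] at hD
        linarith
      have := (ENNReal.toReal_eq_one_iff _).mp ht1
      simpa using this
    have hwd : q.withDensity (ν.rnDeriv q) = q := by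
      rw [withDensity_congr_ae ht1, withDensity_one]
    have hdec := Measure.haveLebesgueDecomposition_add ν q
    rw [hwd] at hdec
    have huniv : ν.singularPart q Set.univ = 0 := by
      have := congrArg (fun m : Measure M => m Set.univ) hdec
      simp only [Measure.add_apply, measure_univ] at this
      have h1 : ν.singularPart q Set.univ + 1 = 0 + 1 := by
        rw [this.symm, zero_add]
      exact WithTop.add_right_cancel (by exact ENNReal.one_ne_top) h1
    have hsp : ν.singularPart q = 0 := Measure.measure_univ_eq_zero.mp huniv
    rw [hsp, zero_add] at hdec
    exact hdec.symm
  · intro h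
    subst h
    have : llr q q =ᵐ[q] 0 := by
      filter_upwards [Measure.rnDeriv_self q] with m hm
      simp [llr, hm]
    rw [integral_congr_ae this]
    simp

/-- Variational formulation of Bayes' theorem (Eq. (5) of the paper): for a prior `μ`,
a nonnegative likelihood `L` with `0 < Z = ∫ L dμ < ∞`, every probability measure
`q ≪ μ` (with `L > 0` `q`-a.e. so that `log L` is well defined, `log L` `q`-integrable
and `log(dq/dμ)` `q`-integrable) satisfies `KL(q‖μ) − ∫ log L dq ≥ −log Z`, with
equality if and only if `q` is the Bayesian posterior `ν = Z⁻¹ • μ.withDensity L`. -/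
theorem stmt1 {M : Type*} [MeasurableSpace M] (μ : Measure M) [IsProbabilityMeasure μ]
    (L : M → ℝ) (hLmeas : Measurable L) (hL0 : ∀ m, 0 ≤ L m)
    (hLint : Integrable L μ) (hZpos : 0 < ∫ m, L m ∂μ)
    (q : Measure M) [IsProbabilityMeasure q] (hqμ : q ≪ μ)
    (hLq : ∀ᵐ m ∂q, 0 < L m)
    (hlogL : Integrable (fun m => Real.log (L m)) q)
    (hllr : Integrable (fun m => Real.log ((q.rnDeriv μ) m).toReal) q) :
    -Real.log (∫ m, L m ∂μ) ≤ klDivR q μ - ∫ m, Real.log (L m) ∂q ∧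
    (klDivR q μ - ∫ m, Real.log (L m) ∂q = -Real.log (∫ m, L m ∂μ) ↔
      q = (ENNReal.ofReal (∫ m, L m ∂μ))⁻¹ •
            μ.withDensity (fun m => ENNReal.ofReal (L m))) := by
  set Z : ℝ := ∫ m, L m ∂μ with hZ_def
  set g : M → ℝ≥0∞ := fun m => ENNReal.ofReal (L m) with hg_def
  have hg_meas : Measurable g := ENNReal.measurable_ofReal.comp hLmeas
  have hZlint : ∫⁻ m, g m ∂μ = ENNReal.ofReal Z := by
    rw [hZ_def, ← ofReal_integral_eq_lintegral_ofReal hLint (Filter.Eventually.of_forall hL0)]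
  have hZ0 : ENNReal.ofReal Z ≠ 0 := (ENNReal.ofReal_pos.mpr hZpos).ne'
  have hZtop : ENNReal.ofReal Z ≠ ∞ := ENNReal.ofReal_ne_top
  set ν : Measure M := (ENNReal.ofReal Z)⁻¹ • μ.withDensity g with hν_def
  haveI hν_prob : IsProbabilityMeasure ν := by
    constructor
    rw [hν_def]
    simp only [Measure.smul_apply, smul_eq_mul]
    rw [withDensity_apply _ MeasurableSet.univ, setLIntegral_univ, hZlint]
    exact ENNReal.inv_mul_cancel hZ0 hZtop
  set h : M → ℝ≥0∞ := fun m => ENNReal.ofReal Z * q.rnDeriv μ m * (g m)⁻¹ with hh_def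
  have hh_meas : Measurable h :=
    ((measurable_const.mul (Measure.measurable_rnDeriv q μ)).mul hg_meas.inv)
  have hS_meas : MeasurableSet {m | 0 < L m} := measurableSet_lt measurable_const hLmeas
  -- ν.withDensity h = q
  have hq_eq : ν.withDensity h = q := by
    have e1 : ν.withDensity h = (ENNReal.ofReal Z)⁻¹ • (μ.withDensity g).withDensity h := by
      rw [hν_def, withDensity_smul_measure]
    have e2 : (μ.withDensity g).withDensity h = μ.withDensity (g * h) :=
      (withDensity_mul μ hg_meas hh_meas).symm
    have e3 : (g * h) = fun m => ENNReal.ofReal Z * ({m | 0 < L m}.indicator (q.rnDeriv μ) m) := by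
      funext m
      by_cases hm : 0 < L m
      · have hg0 : g m ≠ 0 := by
          simp only [hg_def, ne_eq, ENNReal.ofReal_eq_zero, not_le]
          exact hm
        have hgtop : g m ≠ ∞ := ENNReal.ofReal_ne_top
        have hind : {m | 0 < L m}.indicator (q.rnDeriv μ) m = q.rnDeriv μ m :=
          Set.indicator_of_mem (show m ∈ {m | 0 < L m} from hm) _
        simp only [Pi.mul_apply, hh_def, hind]
        calc g m * (ENNReal.ofReal Z * q.rnDeriv μ m * (g m)⁻¹)
            = (g m * (g m)⁻¹) * (ENNReal.ofReal Z * q.rnDeriv μ m) := by ring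
          _ = ENNReal.ofReal Z * q.rnDeriv μ m := by
              rw [ENNReal.mul_inv_cancel hg0 hgtop, one_mul]
      · have hg0 : g m = 0 := by
          simp only [hg_def, ENNReal.ofReal_eq_zero]
          exact le_of_not_gt hm
        have hind : {m | 0 < L m}.indicator (q.rnDeriv μ) m = 0 :=
          Set.indicator_of_notMem (show m ∉ {m | 0 < L m} from hm) _
        simp only [Pi.mul_apply, hg0, hind, zero_mul, mul_zero]
    have e4 : μ.withDensity (g * h)
        = ENNReal.ofReal Z • μ.withDensity ({m | 0 < L m}.indicator (q.rnDeriv μ)) := by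
      rw [e3, ← withDensity_smul _ ((Measure.measurable_rnDeriv q μ).indicator hS_meas)]
      rfl
    have e5 : μ.withDensity ({m | 0 < L m}.indicator (q.rnDeriv μ)) = q := by
      rw [withDensity_indicator hS_meas, ← restrict_withDensity hS_meas,
        Measure.withDensity_rnDeriv_eq q μ hqμ]
      exact Measure.restrict_eq_self_of_ae_mem hLq
    rw [e1, e2, e4, e5, smul_smul, ENNReal.inv_mul_cancel hZ0 hZtop, one_smul]
  have hqν : q ≪ ν := hq_eq ▸ withDensity_absolutelyContinuous ν h
  have hrn : q.rnDeriv ν =ᵐ[ν] h := by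
    have := Measure.rnDeriv_withDensity ν hh_meas
    rwa [hq_eq] at this
  have hllr_eq : llr q ν =ᵐ[q] fun m => Real.log Z + llr q μ m - Real.log (L m) := by
    filter_upwards [hqν.ae_le hrn, Measure.rnDeriv_pos hqμ,
      hqμ.ae_le (Measure.rnDeriv_lt_top q μ), hLq] with m h1 h2 h3 h4
    have hr0 : (q.rnDeriv μ m).toReal ≠ 0 := by
      simp [ENNReal.toReal_eq_zero_iff, h2.ne', h3.ne]
    have htr : (h m).toReal = Z * (q.rnDeriv μ m).toReal * (L m)⁻¹ := by
      rw [hh_def]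
      simp only
      rw [ENNReal.toReal_mul, ENNReal.toReal_mul, ENNReal.toReal_inv,
        ENNReal.toReal_ofReal hZpos.le, hg_def]
      simp [ENNReal.toReal_ofReal (hL0 m)]
    rw [llr, h1, htr, Real.log_mul (by positivity) (by positivity),
      Real.log_mul (by positivity) hr0, Real.log_inv, llr]
    ring
  have hllrν_int : Integrable (llr q ν) q := by
    rw [integrable_congr hllr_eq]
    exact ((integrable_const _).add hllr).sub hlogL
  have hint_eq : ∫ m, llr q ν m ∂q
      = Real.log Z + klDivR q μ - ∫ m, Real.log (L m) ∂q := by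
    rw [integral_congr_ae hllr_eq]
    have e1 : ∫ a, (Real.log Z + llr q μ a - Real.log (L a)) ∂q
        = (∫ a, (Real.log Z + llr q μ a) ∂q) - ∫ a, Real.log (L a) ∂q :=
      integral_sub ((integrable_const _).add hllr) hlogL
    have e2 : ∫ a, (Real.log Z + llr q μ a) ∂q
        = (∫ (_ : M), Real.log Z ∂q) + ∫ a, llr q μ a ∂q :=
      integral_add (integrable_const _) hllr
    rw [e1, e2]
    simp only [integral_const, measure_univ, probReal_univ, ENNReal.toReal_one, smul_eq_mul, one_mul]
    rfl
  obtain ⟨hge, hiff⟩ := gibbs_aux q ν hqν hllrν_int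
  refine ⟨by linarith, ?_⟩
  rw [← hiff]
  constructor
  · intro he; linarith
  · intro he; linarith
end

section
/- Let (M, 𝓑) be a measurable space, p a nonzero finite measure on M (not necessarily a probability measure), and f : M → ℝ a measurable function with ∫ exp(f) dp < ∞. Then for every probability measure q on M with q ≪ p such that f is q-integrable and log(dq/dp) is q-integrable, one has ∫ log(dq/dp) dq ≥ ∫ f dq − log ∫ exp(f) dp. -/
open MeasureTheory Real

lemma kl_nonneg_aux {M : Type*} [MeasurableSpace M] (q μ : Measure M)
    [IsProbabilityMeasure q] [IsProbabilityMeasure μ] (hq : q ≪ μ)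
    (hint : Integrable (llr q μ) q) : 0 ≤ ∫ x, llr q μ x ∂q := by
  set g : M → ℝ := fun x => ((q.rnDeriv μ x)⁻¹).toReal with hg
  -- lintegral bound
  have hmeas : Measurable fun x => (q.rnDeriv μ x)⁻¹ := (q.measurable_rnDeriv μ).inv
  have hlint : ∫⁻ x, (q.rnDeriv μ x)⁻¹ ∂q ≤ 1 := by
    rw [← MeasureTheory.lintegral_rnDeriv_mul hq hmeas.aemeasurable]
    calc ∫⁻ x, q.rnDeriv μ x * (q.rnDeriv μ x)⁻¹ ∂μ ≤ ∫⁻ _, 1 ∂μ :=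
          lintegral_mono fun x => ENNReal.mul_inv_le_one _
      _ = 1 := by simp
  have hgint : Integrable g q := by
    refine integrable_toReal_of_lintegral_ne_top hmeas.aemeasurable ?_
    exact (lt_of_le_of_lt hlint ENNReal.one_lt_top).ne
  have hgle : ∫ x, g x ∂q ≤ 1 := by
    rw [hg, integral_toReal hmeas.aemeasurable ?_]
    · exact ENNReal.toReal_le_of_le_ofReal one_pos.le (by simpa using hlint)
    · filter_upwards [Measure.rnDeriv_pos hq] with x hx
      simp [ENNReal.inv_lt_top, hx]
  have hae : ∀ᵐ x ∂q, -llr q μ x ≤ g x - 1 := by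
    filter_upwards [Measure.rnDeriv_pos hq, hq.ae_le (q.rnDeriv_lt_top μ)] with x hx hx'
    have ht : (q.rnDeriv μ x).toReal ≠ 0 := by
      simp [ENNReal.toReal_eq_zero_iff, hx.ne', hx'.ne]
    have hgpos : 0 < g x := by
      rw [hg]
      simp only [ENNReal.toReal_inv]
      positivity
    have : Real.log (g x) ≤ g x - 1 := Real.log_le_sub_one_of_pos hgpos
    simp only [hg, ENNReal.toReal_inv, Real.log_inv] at this
    rw [llr]
    simp only [hg, ENNReal.toReal_inv]
    linarith
  have := integral_mono_ae hint.neg (hgint.sub (integrable_const 1)) hae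
  rw [Pi.neg_def, integral_neg, Pi.sub_def, integral_sub hgint (integrable_const 1)] at this
  simp only [integral_const, measure_univ, probReal_univ, ENNReal.toReal_one, smul_eq_mul, one_mul] at this
  linarith

/-- Donsker–Varadhan/Gibbs inequality against a possibly unnormalized finite reference
measure `p ≠ 0`: for every probability measure `q ≪ p` with `f` `q`-integrable and
`log(dq/dp)` `q`-integrable, `∫ log(dq/dp) dq ≥ ∫ f dq − log ∫ exp(f) dp`. -/
theorem stmt3 {M : Type*} [MeasurableSpace M] (p : Measure M) [IsFiniteMeasure p]
    (hp : p ≠ 0) (f : M → ℝ) (hf : Measurable f)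
    (hexp : Integrable (fun m => Real.exp (f m)) p)
    (q : Measure M) [IsProbabilityMeasure q] (hq : q ≪ p)
    (hfq : Integrable f q)
    (hllr : Integrable (fun m => Real.log ((q.rnDeriv p) m).toReal) q) :
    klDivR q p ≥ (∫ m, f m ∂q) - Real.log (∫ m, Real.exp (f m) ∂p) := by
  have : NeZero p := ⟨hp⟩
  have hprob : IsProbabilityMeasure (p.tilted f) := isProbabilityMeasure_tilted hexp
  have hqt : q ≪ p.tilted f := hq.trans (absolutelyContinuous_tilted hexp)
  have hllr' : Integrable (llr q p) q := hllr
  have hint : Integrable (llr q (p.tilted f)) q :=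
    integrable_llr_tilted_right hq hfq hllr' hexp
  have h0 : 0 ≤ ∫ x, llr q (p.tilted f) x ∂q := kl_nonneg_aux q (p.tilted f) hqt hint
  rw [integral_llr_tilted_right hq hfq hexp hllr'] at h0
  have : klDivR q p = ∫ x, llr q p x ∂q := rfl
  rw [this]
  linarith
end

section
/- (Weak duality of RegBayes.) Let (M, 𝓑) be a measurable space, p a nonzero finite measure on M, T ≥ 1, ψ : M → ℝ^T a bounded measurable function, and g : ℝ^T → ℝ ∪ {+∞} any function, with Fenchel conjugate g*(y) := sup_{x ∈ ℝ^T} (⟨y, x⟩ − g(x)) valued in ℝ ∪ {±∞}. Then for every probability measure q ≪ p such that ψ is q-integrable and log(dq/dp) is q-integrable, and for every φ ∈ ℝ^T, one has (as extended reals): ∫ log(dq/dp) dq + g(∫ ψ dq) ≥ −log ∫ exp(⟨φ, ψ(m)⟩) dp(m) − g*(−φ). -/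
open MeasureTheory Real

section RegBayesAux

open MeasureTheory Real
open scoped ENNReal

private lemma regbayes_integral_llr_nonneg {α : Type*} [MeasurableSpace α] {μ ν : Measure α}
    [IsProbabilityMeasure μ] [IsProbabilityMeasure ν] (hμν : μ ≪ ν)
    (h : Integrable (llr μ ν) μ) : 0 ≤ ∫ x, llr μ ν x ∂μ := by
  set G : α → ℝ := fun x => ((μ.rnDeriv ν x)⁻¹).toReal with hG
  have hmeas : Measurable fun x => (μ.rnDeriv ν x)⁻¹ := (Measure.measurable_rnDeriv μ ν).inv
  have hμeq := Measure.withDensity_rnDeriv_eq μ ν hμν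
  have hL : ∫⁻ x, (μ.rnDeriv ν x)⁻¹ ∂μ ≤ 1 := by
    have e1 : ∫⁻ x, (μ.rnDeriv ν x)⁻¹ ∂μ
        = ∫⁻ x, (μ.rnDeriv ν x)⁻¹ ∂(ν.withDensity (μ.rnDeriv ν)) := by rw [hμeq]
    rw [e1, lintegral_withDensity_eq_lintegral_mul _ (Measure.measurable_rnDeriv μ ν) hmeas]
    calc ∫⁻ x, (μ.rnDeriv ν * fun x => (μ.rnDeriv ν x)⁻¹) x ∂ν
        ≤ ∫⁻ _, 1 ∂ν := by
          refine lintegral_mono fun x => ?_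
          simp only [Pi.mul_apply]
          exact ENNReal.mul_inv_le_one _
      _ = 1 := by simp
  have hGint : Integrable G μ :=
    integrable_toReal_of_lintegral_ne_top hmeas.aemeasurable
      (lt_of_le_of_lt hL (by norm_num)).ne
  have hpos : ∀ᵐ x ∂μ, 0 < μ.rnDeriv ν x := Measure.rnDeriv_pos hμν
  have hGle : ∫ x, G x ∂μ ≤ 1 := by
    rw [hG, integral_toReal hmeas.aemeasurable
      (hpos.mono fun x hx => ENNReal.inv_lt_top.mpr hx)]
    calc (∫⁻ x, (μ.rnDeriv ν x)⁻¹ ∂μ).toReal ≤ (1 : ℝ≥0∞).toReal :=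
          ENNReal.toReal_mono (by norm_num) hL
      _ = 1 := by simp
  have hae : ∀ᵐ x ∂μ, 1 - G x ≤ llr μ ν x := by
    filter_upwards [hpos, hμν.ae_le (Measure.rnDeriv_lt_top μ ν)] with x hx hxt
    have hr : 0 < (μ.rnDeriv ν x).toReal := ENNReal.toReal_pos hx.ne' hxt.ne
    have h1 : Real.log ((μ.rnDeriv ν x).toReal)⁻¹ ≤ ((μ.rnDeriv ν x).toReal)⁻¹ - 1 :=
      Real.log_le_sub_one_of_pos (inv_pos.mpr hr)
    rw [Real.log_inv] at h1
    have : G x = ((μ.rnDeriv ν x).toReal)⁻¹ := by rw [hG]; simp [ENNReal.toReal_inv]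
    rw [llr, this]
    linarith
  have hmono := integral_mono_ae ((integrable_const (1 : ℝ)).sub hGint) h hae
  simp only [Pi.sub_apply] at hmono
  rw [integral_sub (integrable_const _) hGint] at hmono
  simp only [integral_const, measure_univ, ENNReal.toReal_one, probReal_univ, smul_eq_mul, one_mul] at hmono
  linarith

end RegBayesAux

/-- Weak duality of RegBayes: for a nonzero finite reference measure `p`, bounded
measurable features `ψ : M → ℝ^T`, and any regularizer `g : ℝ^T → ℝ ∪ {+∞}` with Fenchel
conjugate `g*(y) = sup_x (⟨y,x⟩ − g x)` (valued in the extended reals), every feasible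
probability measure `q` and every dual vector `φ` satisfy, as extended reals,
`KL(q‖p) + g(∫ ψ dq) ≥ −log ∫ exp ⟨φ,ψ⟩ dp − g*(−φ)`. -/
theorem stmt6 {M : Type*} [MeasurableSpace M] (p : Measure M) [IsFiniteMeasure p]
    (hp : p ≠ 0) (T : ℕ) (hT : 1 ≤ T)
    (ψ : M → EuclideanSpace ℝ (Fin T)) (hψ : Measurable ψ)
    (B : ℝ) (hψB : ∀ m, ‖ψ m‖ ≤ B)
    (g : EuclideanSpace ℝ (Fin T) → EReal) (hg : ∀ x, g x ≠ ⊥)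
    (q : Measure M) [IsProbabilityMeasure q] (hq : q ≪ p)
    (hψq : Integrable ψ q)
    (hllr : Integrable (fun m => Real.log ((q.rnDeriv p) m).toReal) q)
    (φ : EuclideanSpace ℝ (Fin T)) :
    ((klDivR q p : ℝ) : EReal) + g (∫ m, ψ m ∂q)
      ≥ ((-Real.log (∫ m, Real.exp ((inner ℝ φ (ψ m) : ℝ)) ∂p) : ℝ) : EReal)
          - ⨆ x : EuclideanSpace ℝ (Fin T), (((inner ℝ (-φ) x : ℝ) : EReal) - g x) := by
  haveI : NeZero p := ⟨hp⟩
  set f : M → ℝ := fun m => (inner ℝ φ (ψ m) : ℝ) with hfdef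
  have hfmeas : Measurable f := measurable_const.inner hψ
  have hfbd : ∀ m, |f m| ≤ ‖φ‖ * B := fun m =>
    (abs_real_inner_le_norm φ (ψ m)).trans
      (mul_le_mul_of_nonneg_left (hψB m) (norm_nonneg _))
  have hexp : Integrable (fun m => Real.exp (f m)) p := by
    refine (integrable_const (Real.exp (‖φ‖ * B))).mono'
      ((Real.measurable_exp.comp hfmeas)).aestronglyMeasurable
      (Filter.Eventually.of_forall fun m => ?_)
    rw [Real.norm_eq_abs, abs_of_pos (Real.exp_pos _)]
    exact Real.exp_le_exp.mpr ((le_abs_self _).trans (hfbd m))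
  set Z : ℝ := ∫ m, Real.exp (f m) ∂p with hZdef
  have hZpos : 0 < Z := integral_exp_pos hexp
  set ν := p.tilted f with hν
  haveI : IsProbabilityMeasure ν := isProbabilityMeasure_tilted hexp
  have hqν : q ≪ ν := hq.trans (absolutelyContinuous_tilted hexp)
  have hfq : Integrable f q := (innerSL ℝ φ).integrable_comp hψq
  have hllr' : Integrable (llr q p) q := hllr
  have hint : Integrable (llr q ν) q := integrable_llr_tilted_right hq hfq hllr' hexp
  have key : ∫ m, llr q ν m ∂q = ∫ m, llr q p m ∂q - ∫ m, f m ∂q + Real.log Z :=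
    integral_llr_tilted_right hq hfq hexp hllr'
  have hnn : 0 ≤ ∫ m, llr q ν m ∂q := regbayes_integral_llr_nonneg hqν hint
  set x₀ : EuclideanSpace ℝ (Fin T) := ∫ m, ψ m ∂q with hx₀
  set c : ℝ := (inner ℝ φ x₀ : ℝ) with hc
  have hswap : ∫ m, f m ∂q = c := by
    rw [hc, hx₀, hfdef]
    exact ContinuousLinearMap.integral_comp_comm (innerSL ℝ φ) hψq
  have hK : c - Real.log Z ≤ klDivR q p := by
    have : klDivR q p = ∫ m, llr q p m ∂q := rfl
    rw [this]
    rw [hswap] at key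
    linarith
  set S : EReal := ⨆ x : EuclideanSpace ℝ (Fin T), (((inner ℝ (-φ) x : ℝ) : EReal) - g x) with hSdef
  rw [ge_iff_le]
  rcases eq_or_ne (g x₀) ⊤ with hgt | hgt
  · rw [hgt, ← EReal.coe_add_top (klDivR q p)]
    exact le_top
  · obtain ⟨r, hr⟩ : ∃ r : ℝ, g x₀ = (r : ℝ) := by
      lift g x₀ to ℝ using ⟨hgt, hg x₀⟩ with r
      exact ⟨r, rfl⟩
    have hS : ((-c - r : ℝ) : EReal) ≤ S := by
      have h1 : (((inner ℝ (-φ) x₀ : ℝ) : EReal) - g x₀) ≤ S := by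
        rw [hSdef]
        exact le_iSup (fun x : EuclideanSpace ℝ (Fin T) =>
          (((inner ℝ (-φ) x : ℝ) : EReal) - g x)) x₀
      have h2 : (inner ℝ (-φ) x₀ : ℝ) = -c := by rw [hc, inner_neg_left]
      rwa [h2, hr, ← EReal.coe_sub] at h1
    calc ((-Real.log Z : ℝ) : EReal) - S
        ≤ ((-Real.log Z : ℝ) : EReal) - ((-c - r : ℝ) : EReal) :=
          EReal.sub_le_sub le_rfl hS
      _ = (((-Real.log Z) - (-c - r) : ℝ) : EReal) := by rw [← EReal.coe_sub]
      _ ≤ ((klDivR q p + r : ℝ) : EReal) := by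
          rw [EReal.coe_le_coe_iff]; linarith
      _ = ((klDivR q p : ℝ) : EReal) + g x₀ := by rw [hr, EReal.coe_add]
end

section
/- Let y ∈ ℝ, ε > 0, C ≥ 0, and define g₂ : ℝ → ℝ by g₂(x) = C · max(0, |x − y| − ε). Then its convex conjugate, computed in the extended reals, is g₂*(μ) := sup_{x ∈ ℝ} (x·μ − g₂(x)) = μ·y + ε·|μ| if |μ| ≤ C, and g₂*(μ) = +∞ otherwise. -/
/-- Lemma 11 of the paper: the convex conjugate of the ε-insensitive loss
`g₂(x) = C·max(0, |x−y|−ε)`, computed in the extended reals, equals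
`μ·y + ε·|μ|` when `|μ| ≤ C` and `+∞` otherwise. -/
theorem stmt10 (y ε C : ℝ) (hε : 0 < ε) (hC : 0 ≤ C) (μ : ℝ) :
    (|μ| ≤ C →
      (⨆ x : ℝ, ((x * μ - C * max 0 (|x - y| - ε) : ℝ) : EReal))
        = ((μ * y + ε * |μ| : ℝ) : EReal)) ∧
    (¬ (|μ| ≤ C) →
      (⨆ x : ℝ, ((x * μ - C * max 0 (|x - y| - ε) : ℝ) : EReal)) = ⊤) := by
  constructor
  · intro hμ
    apply le_antisymm
    · apply iSup_le
      intro x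
      rw [EReal.coe_le_coe_iff]
      rcases le_total (|x - y| - ε) 0 with h | h
      · rw [max_eq_left h]
        rcases abs_cases (x - y) with ⟨h1, h2⟩ | ⟨h1, h2⟩ <;>
          rcases abs_cases μ with ⟨h3, h4⟩ | ⟨h3, h4⟩ <;> nlinarith
      · rw [max_eq_right h]
        rcases abs_cases (x - y) with ⟨h1, h2⟩ | ⟨h1, h2⟩ <;>
          rcases abs_cases μ with ⟨h3, h4⟩ | ⟨h3, h4⟩ <;> nlinarith
    · have hle := le_iSup (fun x : ℝ => ((x * μ - C * max 0 (|x - y| - ε) : ℝ) : EReal))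
        (y + ε * (if 0 ≤ μ then 1 else -1))
      refine le_trans (le_of_eq ?_) hle
      rw [EReal.coe_eq_coe_iff]
      rcases le_or_gt 0 μ with h | h
      · simp only [if_pos h]
        have : |y + ε * 1 - y| - ε = 0 := by
          rw [show y + ε * 1 - y = ε by ring, abs_of_pos hε]; ring
        rw [this, max_self, abs_of_nonneg h]; ring
      · simp only [if_neg (not_le.mpr h)]
        have : |y + ε * (-1) - y| - ε = 0 := by
          rw [show y + ε * (-1) - y = -ε by ring, abs_neg, abs_of_pos hε]; ring
        rw [this, max_self, abs_of_neg h]; ring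
  · intro hμ
    push_neg at hμ
    rw [iSup_eq_top]
    intro b hb
    induction b using EReal.rec with
    | bot => exact ⟨0, EReal.bot_lt_coe _⟩
    | top => exact absurd hb (lt_irrefl _)
    | coe r =>
        set s : ℝ := if 0 ≤ μ then 1 else -1 with hs
        have hsμ : s * μ = |μ| := by
          rcases le_or_gt 0 μ with h | h
          · rw [hs, if_pos h, abs_of_nonneg h]; ring
          · rw [hs, if_neg (not_le.mpr h), abs_of_neg h]; ring
        have hsabs : |s| = 1 := by
          rcases le_or_gt 0 μ with h | h
          · rw [hs, if_pos h]; norm_num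
          · rw [hs, if_neg (not_le.mpr h)]; norm_num
        set t : ℝ := max ε ((r - y * μ - C * ε + 1) / (|μ| - C)) with ht
        have htε : ε ≤ t := le_max_left _ _
        have hden : 0 < |μ| - C := by linarith
        have htbig : r - y * μ - C * ε + 1 ≤ t * (|μ| - C) := by
          have h2 := le_max_right ε ((r - y * μ - C * ε + 1) / (|μ| - C))
          calc r - y * μ - C * ε + 1 = (r - y * μ - C * ε + 1) / (|μ| - C) * (|μ| - C) := by
                field_simp
            _ ≤ t * (|μ| - C) := mul_le_mul_of_nonneg_right h2 hden.le
        refine ⟨y + t * s, ?_⟩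
        rw [EReal.coe_lt_coe_iff]
        have habs : |y + t * s - y| = t := by
          rw [show y + t * s - y = t * s by ring, abs_mul, hsabs, mul_one,
            abs_of_pos (lt_of_lt_of_le hε htε)]
        rw [habs, max_eq_right (by linarith)]
        nlinarith [hsμ]
end

section
/- Let (M, 𝓑) be a measurable space, μ a σ-finite measure on M, L : M → [0,∞) measurable, and q a probability measure with q ≪ μ such that L > 0 holds q-almost everywhere. Then q ≪ μ.withDensity L, and q-almost everywhere the Radon–Nikodym derivatives satisfy d q / d(μ.withDensity L) = (dq/dμ) / L; consequently, whenever log(dq/dμ) and log L are q-integrable, so is log(dq/d(μ.withDensity L)) and ∫ log(dq/dμ) dq − ∫ log L dq = ∫ log( dq / d(μ.withDensity L) ) dq. -/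
open MeasureTheory Real
open scoped NNReal ENNReal

/-- Chain rule for log-likelihood ratios (Eq. (15) of the paper,
`KL(q‖π) − ∫ log p(D|M) dq = KL(q‖p(M,D))`): if `μ` is σ-finite, `L : M → [0,∞)` is
measurable, `q` is a probability measure with `q ≪ μ` and `L > 0` `q`-a.e., then
`q ≪ μ.withDensity L`, the Radon–Nikodym derivatives satisfy
`dq/d(μ.withDensity L) = (dq/dμ)/L` `q`-a.e., and whenever `log(dq/dμ)` and `log L` are
`q`-integrable, so is `log(dq/d(μ.withDensity L))` and
`∫ log(dq/dμ) dq − ∫ log L dq = ∫ log(dq/d(μ.withDensity L)) dq`. -/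
theorem stmt16 {M : Type*} [MeasurableSpace M] (μ : Measure M) [SigmaFinite μ]
    (L : M → ℝ≥0) (hLmeas : Measurable L)
    (q : Measure M) [IsProbabilityMeasure q] (hqμ : q ≪ μ)
    (hLpos : ∀ᵐ m ∂q, 0 < L m) :
    q ≪ μ.withDensity (fun m => (L m : ℝ≥0∞)) ∧
    (q.rnDeriv (μ.withDensity (fun m => (L m : ℝ≥0∞))))
      =ᵐ[q] (fun m => q.rnDeriv μ m / (L m : ℝ≥0∞)) ∧
    (Integrable (fun m => Real.log ((q.rnDeriv μ) m).toReal) q →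
      Integrable (fun m => Real.log ((L m : ℝ))) q →
      Integrable (fun m =>
          Real.log ((q.rnDeriv (μ.withDensity (fun m' => (L m' : ℝ≥0∞)))) m).toReal) q ∧
      (∫ m, Real.log ((q.rnDeriv μ) m).toReal ∂q) - (∫ m, Real.log ((L m : ℝ)) ∂q)
        = ∫ m, Real.log
            ((q.rnDeriv (μ.withDensity (fun m' => (L m' : ℝ≥0∞)))) m).toReal ∂q) := by
  set L' : M → ℝ≥0∞ := fun m => (L m : ℝ≥0∞) with hL'
  have hL'meas : Measurable L' := hLmeas.coe_nnreal_ennreal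
  set ν : Measure M := μ.withDensity L' with hν
  have hνsf : SigmaFinite ν :=
    SigmaFinite.withDensity_of_ne_top (ae_of_all _ fun m => ENNReal.coe_ne_top)
  -- q ≪ ν
  have hqν : q ≪ ν := by
    refine Measure.AbsolutelyContinuous.mk fun s hs hνs => ?_
    rw [hν, withDensity_apply _ hs] at hνs
    have h0 : ∀ᵐ m ∂μ, m ∈ s → L' m = 0 := (setLIntegral_eq_zero_iff hs hL'meas).mp hνs
    have hμ0 : μ ({m | ¬ (m ∈ s → L' m = 0)}) = 0 := ae_iff.mp h0
    have hq0 : q ({m | ¬ (m ∈ s → L' m = 0)}) = 0 := hqμ hμ0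
    have hqL : q ({m | ¬ 0 < L m}) = 0 := hLpos
    have hsub : s ⊆ {m | ¬ (m ∈ s → L' m = 0)} ∪ {m | ¬ 0 < L m} := by
      intro m hm
      by_cases hLm : 0 < L m
      · left
        simp only [Set.mem_setOf_eq, Classical.not_imp]
        exact ⟨hm, by simp [hL', hLm.ne']⟩
      · right; exact hLm
    exact le_antisymm (le_trans (measure_mono hsub)
      (le_trans (measure_union_le _ _) (by rw [hq0, hqL, add_zero]))) (zero_le)
  -- the rnDeriv identity
  have key : q.rnDeriv μ =ᵐ[μ] L' * q.rnDeriv ν := by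
    have h1 : q = ν.withDensity (q.rnDeriv ν) := (Measure.withDensity_rnDeriv_eq _ _ hqν).symm
    have h2 : q = μ.withDensity (L' * q.rnDeriv ν) := by
      rw [withDensity_mul μ hL'meas (Measure.measurable_rnDeriv _ _)]
      exact h1
    calc q.rnDeriv μ = (μ.withDensity (L' * q.rnDeriv ν)).rnDeriv μ := by rw [← h2]
      _ =ᵐ[μ] L' * q.rnDeriv ν :=
        Measure.rnDeriv_withDensity μ (hL'meas.mul (Measure.measurable_rnDeriv _ _))
  have keyq : ∀ᵐ m ∂q, q.rnDeriv μ m = L' m * q.rnDeriv ν m := hqμ.ae_le key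
  have hrn : q.rnDeriv ν =ᵐ[q] fun m => q.rnDeriv μ m / L' m := by
    filter_upwards [keyq, hLpos] with m hm hLm
    rw [hm, mul_div_assoc,
      ENNReal.mul_div_cancel (by simpa using hLm.ne') ENNReal.coe_ne_top]
  refine ⟨hqν, hrn, fun hint1 hint2 => ?_⟩
  -- log identity a.e. q
  have hpos : ∀ᵐ m ∂q, 0 < q.rnDeriv μ m := Measure.rnDeriv_pos hqμ
  have hlt : ∀ᵐ m ∂q, q.rnDeriv μ m < ∞ := hqμ.ae_le (Measure.rnDeriv_lt_top q μ)
  have hlog : (fun m => Real.log ((q.rnDeriv ν) m).toReal)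
      =ᵐ[q] fun m => Real.log ((q.rnDeriv μ) m).toReal - Real.log ((L m : ℝ)) := by
    filter_upwards [hrn, hpos, hlt, hLpos] with m hm hp hl hL0
    rw [hm, ENNReal.toReal_div]
    have : (L' m).toReal = (L m : ℝ) := by simp [hL']
    rw [this, Real.log_div (ENNReal.toReal_pos hp.ne' hl.ne).ne' (by exact_mod_cast hL0.ne')]
  have hint : Integrable (fun m => Real.log ((q.rnDeriv ν) m).toReal) q :=
    (hint1.sub hint2).congr hlog.symm
  refine ⟨hint, ?_⟩
  rw [integral_congr_ae hlog, integral_sub hint1 hint2]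
end

section
/- (KL-divergence with relaxed moment-matching constraints.) Let (M, 𝓑) be a measurable space, p a probability measure on M, T ≥ 1, ψ : M → ℝ^T a bounded measurable function (ℝ^T equipped with the Euclidean norm, which is self-dual), ψ̃ ∈ ℝ^T, and ε > 0. Assume the Slater-type qualification that there exists a probability measure q₀ ≪ p with log(dq₀/dp) q₀-integrable and ‖∫ ψ dq₀ − ψ̃‖ < ε. Then inf { KL(q ‖ p) : q a probability measure, q ≪ p, log(dq/dp) q-integrable, ‖∫ ψ dq − ψ̃‖ ≤ ε } = sup_{φ ∈ ℝ^T} ( ⟨φ, ψ̃⟩ − log ∫ exp(⟨φ, ψ(m)⟩) dp(m) − ε‖φ‖ ), and if φ̂ attains the supremum then the unique primal minimizer is the probability measure q̂ with density exp(⟨φ̂, ψ(m)⟩ − Λ_{φ̂}) with respect to p, where Λ_{φ̂} := log ∫ exp(⟨φ̂, ψ⟩) dp. -/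
open MeasureTheory Real


lemma kl_aux_nonneg {M : Type*} [MeasurableSpace M] {μ ν : Measure M}
    [IsProbabilityMeasure μ] [IsProbabilityMeasure ν] (hμν : μ ≪ ν)
    (h_int : Integrable (llr μ ν) μ) :
    0 ≤ ∫ x, llr μ ν x ∂μ ∧ (∫ x, llr μ ν x ∂μ = 0 → μ = ν) := by
  have h_inv : (μ.rnDeriv ν)⁻¹ =ᵐ[μ] ν.rnDeriv μ := Measure.inv_rnDeriv hμν
  have h_pos : ∀ᵐ x ∂μ, 0 < μ.rnDeriv ν x := Measure.rnDeriv_pos hμν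
  have h_fin : ∀ᵐ x ∂μ, μ.rnDeriv ν x < ⊤ := hμν.ae_le (Measure.rnDeriv_lt_top μ ν)
  -- the function 1 - (dν/dμ).toReal
  set G : M → ℝ := fun x => 1 - (ν.rnDeriv μ x).toReal with hG
  have hG_int : Integrable G μ :=
    (integrable_const 1).sub (Measure.integrable_toReal_rnDeriv)
  have h_ptwise : ∀ᵐ x ∂μ, G x ≤ llr μ ν x := by
    filter_upwards [h_inv, h_pos, h_fin] with x hx hpos hfin
    have hr_pos : 0 < (μ.rnDeriv ν x).toReal :=
      ENNReal.toReal_pos hpos.ne' hfin.ne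
    have hlog : Real.log ((μ.rnDeriv ν x).toReal)⁻¹ ≤ ((μ.rnDeriv ν x).toReal)⁻¹ - 1 :=
      Real.log_le_sub_one_of_pos (by positivity)
    rw [Real.log_inv] at hlog
    have hinv : ((μ.rnDeriv ν x).toReal)⁻¹ = (ν.rnDeriv μ x).toReal := by
      rw [← ENNReal.toReal_inv, ← hx]; rfl
    rw [hinv] at hlog
    simp only [hG, llr]
    linarith
  have h_intG : ∫ x, G x ∂μ = 1 - ∫ x, (ν.rnDeriv μ x).toReal ∂μ := by
    rw [integral_sub (integrable_const 1) Measure.integrable_toReal_rnDeriv]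
    simp
  have h_le_one : ∫ x, (ν.rnDeriv μ x).toReal ∂μ ≤ 1 := by
    have := Measure.setIntegral_toReal_rnDeriv_le (μ := ν) (ν := μ) (s := Set.univ)
      (measure_ne_top ν _)
    simpa using this
  have h_main : ∫ x, G x ∂μ ≤ ∫ x, llr μ ν x ∂μ := integral_mono_ae hG_int h_int h_ptwise
  have h0 : (0:ℝ) ≤ ∫ x, llr μ ν x ∂μ := by rw [h_intG] at h_main; linarith
  refine ⟨h0, fun heq => ?_⟩
  -- equality case
  have hGint0 : ∫ x, (llr μ ν x - G x) ∂μ = 0 := by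
    rw [integral_sub h_int hG_int, heq, h_intG]
    have h1 : (0:ℝ) ≤ 1 - ∫ x, (ν.rnDeriv μ x).toReal ∂μ := by
      have := h_main; rw [h_intG] at this; linarith [heq ▸ this]
    have h2 : 1 - ∫ x, (ν.rnDeriv μ x).toReal ∂μ ≤ 0 := by
      rw [h_intG] at h_main; linarith [heq ▸ h_main]
    linarith
  have h_zero : ∀ᵐ x ∂μ, llr μ ν x - G x = 0 := by
    have hnn : 0 ≤ᵐ[μ] fun x => llr μ ν x - G x := by
      filter_upwards [h_ptwise] with x hx
      simp only [Pi.zero_apply]; linarith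
    exact (integral_eq_zero_iff_of_nonneg_ae hnn (h_int.sub hG_int)).mp hGint0
  -- deduce rnDeriv = 1 a.e. μ
  have h_one : ∀ᵐ x ∂μ, μ.rnDeriv ν x = 1 := by
    filter_upwards [h_zero, h_inv, h_pos, h_fin] with x hx hinv hpos hfin
    have hr_pos : 0 < (μ.rnDeriv ν x).toReal := ENNReal.toReal_pos hpos.ne' hfin.ne
    have hinv' : ((μ.rnDeriv ν x).toReal)⁻¹ = (ν.rnDeriv μ x).toReal := by
      rw [← ENNReal.toReal_inv, ← hinv]; rfl
    have hxeq : Real.log ((μ.rnDeriv ν x).toReal) = 1 - ((μ.rnDeriv ν x).toReal)⁻¹ := by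
      simp only [llr, hG] at hx
      rw [hinv']; linarith
    by_contra hne
    have hne' : (μ.rnDeriv ν x).toReal ≠ 1 := fun h => hne ((ENNReal.toReal_eq_one_iff _).mp h)
    have hstrict : Real.log ((μ.rnDeriv ν x).toReal)⁻¹ < ((μ.rnDeriv ν x).toReal)⁻¹ - 1 :=
      Real.log_lt_sub_one_of_pos (by positivity) (by
        intro h; exact hne' (by field_simp at h; simpa using h.symm))
    rw [Real.log_inv, hxeq] at hstrict
    linarith
  -- conclude μ = ν
  set s : Set M := {x | μ.rnDeriv ν x = 1} with hs
  have hs_meas : MeasurableSet s := (Measure.measurable_rnDeriv μ ν) (measurableSet_singleton 1)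
  have hμsc : μ sᶜ = 0 := by
    have := ae_iff.mp h_one
    convert this using 2
    rfl
  have hμs : μ s = 1 := (prob_compl_eq_zero_iff hs_meas).mp hμsc
  have hνs : ν s = 1 := by
    have h1 : ∫⁻ x in s, μ.rnDeriv ν x ∂ν = μ s := Measure.setLIntegral_rnDeriv hμν s
    have h2 : ∫⁻ x in s, μ.rnDeriv ν x ∂ν = ∫⁻ _ in s, 1 ∂ν := by
      refine setLIntegral_congr_fun hs_meas (fun x hx => hx)
    rw [h2, setLIntegral_one] at h1
    rw [h1, hμs]
  have hνsc : ν sᶜ = 0 := (prob_compl_eq_zero_iff hs_meas).mpr hνs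
  have h_one_ν : μ.rnDeriv ν =ᵐ[ν] 1 := by
    rw [Filter.EventuallyEq, ae_iff]
    refine measure_mono_null (fun x hx => ?_) hνsc
    simpa [hs] using hx
  calc μ = ν.withDensity (μ.rnDeriv ν) := (Measure.withDensity_rnDeriv_eq μ ν hμν).symm
  _ = ν.withDensity 1 := withDensity_congr_ae h_one_ν
  _ = ν := withDensity_one

section Aux

variable {M : Type*} [MeasurableSpace M]

lemma integrable_of_bounded {q : Measure M} [IsFiniteMeasure q] {f : M → ℝ}
    (hf : AEStronglyMeasurable f q) {C : ℝ} (hfC : ∀ m, |f m| ≤ C) :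
    Integrable f q :=
  Integrable.mono' (integrable_const C) hf (ae_of_all _ fun m => by
    simpa [Real.norm_eq_abs] using hfC m)

lemma integrable_exp_of_bounded {q : Measure M} [IsFiniteMeasure q] {f : M → ℝ}
    (hf : AEStronglyMeasurable f q) {C : ℝ} (hfC : ∀ m, |f m| ≤ C) :
    Integrable (fun m => Real.exp (f m)) q :=
  Integrable.mono' (integrable_const (Real.exp C)) ((Real.continuous_exp.comp_aestronglyMeasurable hf))
    (ae_of_all _ fun m => by
      rw [Real.norm_eq_abs, abs_of_pos (Real.exp_pos _)]
      exact Real.exp_le_exp.mpr ((abs_le.mp (hfC m)).2))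

lemma gibbs_ineq {p q : Measure M} [IsProbabilityMeasure p] [IsProbabilityMeasure q]
    (hqp : q ≪ p) (h_int : Integrable (llr q p) q)
    {f : M → ℝ} (hf : Measurable f) {C : ℝ} (hfC : ∀ m, |f m| ≤ C) :
    ((∫ m, f m ∂q) - Real.log (∫ m, Real.exp (f m) ∂p) ≤ ∫ x, llr q p x ∂q)
    ∧ ((∫ x, llr q p x ∂q = (∫ m, f m ∂q) - Real.log (∫ m, Real.exp (f m) ∂p))
        → q = p.tilted f) := by
  haveI : NeZero p := ⟨IsProbabilityMeasure.ne_zero p⟩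
  have hexp : Integrable (fun m => Real.exp (f m)) p :=
    integrable_exp_of_bounded hf.aestronglyMeasurable hfC
  have hfq : Integrable f q := integrable_of_bounded hf.aestronglyMeasurable hfC
  haveI : IsProbabilityMeasure (p.tilted f) := isProbabilityMeasure_tilted hexp
  have hq_tilted : q ≪ p.tilted f := hqp.trans (absolutelyContinuous_tilted hexp)
  have h_int_t : Integrable (llr q (p.tilted f)) q :=
    integrable_llr_tilted_right hqp hfq h_int hexp
  have key : ∫ x, llr q (p.tilted f) x ∂q
      = ∫ x, llr q p x ∂q - ∫ m, f m ∂q + Real.log (∫ m, Real.exp (f m) ∂p) :=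
    integral_llr_tilted_right hqp hfq hexp h_int
  obtain ⟨h0, heq⟩ := kl_aux_nonneg hq_tilted h_int_t
  constructor
  · rw [key] at h0; linarith
  · intro h
    apply heq
    rw [key, h]; ring

end Aux

section Main

variable {M : Type*} [MeasurableSpace M] {T : ℕ}

noncomputable def dualFn (p : Measure M) (ψ : M → EuclideanSpace ℝ (Fin T))
    (ψt : EuclideanSpace ℝ (Fin T)) (ε : ℝ) (φ : EuclideanSpace ℝ (Fin T)) : ℝ :=
  (inner ℝ φ ψt : ℝ) - Real.log (∫ m, Real.exp ((inner ℝ φ (ψ m) : ℝ)) ∂p) - ε * ‖φ‖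

variable {p : Measure M} [IsProbabilityMeasure p]
    {ψ : M → EuclideanSpace ℝ (Fin T)} (hψ : Measurable ψ)
    {B : ℝ} (hψB : ∀ m, ‖ψ m‖ ≤ B)

set_option linter.unusedSectionVars false
include hψ hψB

lemma measurable_innerψ (φ : EuclideanSpace ℝ (Fin T)) :
    Measurable (fun m => (inner ℝ φ (ψ m) : ℝ)) :=
  (innerSL ℝ φ).continuous.measurable.comp hψ

lemma abs_innerψ_le (φ : EuclideanSpace ℝ (Fin T)) (m : M) :
    |(inner ℝ φ (ψ m) : ℝ)| ≤ ‖φ‖ * B :=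
  (abs_real_inner_le_norm φ (ψ m)).trans
    (mul_le_mul_of_nonneg_left (hψB m) (norm_nonneg φ))

lemma integrable_ψ (q : Measure M) [IsProbabilityMeasure q] : Integrable ψ q :=
  Integrable.mono' (integrable_const B) hψ.aestronglyMeasurable
    (ae_of_all _ fun m => hψB m)

lemma integrable_exp_innerψ (φ : EuclideanSpace ℝ (Fin T)) :
    Integrable (fun m => Real.exp ((inner ℝ φ (ψ m) : ℝ))) p :=
  integrable_exp_of_bounded (measurable_innerψ hψ hψB φ).aestronglyMeasurable
    (abs_innerψ_le hψ hψB φ)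

lemma Z_pos (φ : EuclideanSpace ℝ (Fin T)) :
    0 < ∫ m, Real.exp ((inner ℝ φ (ψ m) : ℝ)) ∂p := by
  haveI : NeZero p := ⟨IsProbabilityMeasure.ne_zero p⟩
  exact integral_exp_pos (integrable_exp_innerψ hψ hψB φ)

lemma weak_duality {ψt : EuclideanSpace ℝ (Fin T)} {ε : ℝ} (hε : 0 ≤ ε)
    {q : Measure M} [IsProbabilityMeasure q] (hqp : q ≪ p)
    (h_int : Integrable (llr q p) q) (hfeas : ‖(∫ m, ψ m ∂q) - ψt‖ ≤ ε)
    (φ : EuclideanSpace ℝ (Fin T)) :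
    dualFn p ψ ψt ε φ ≤ ∫ x, llr q p x ∂q := by
  have h1 := (gibbs_ineq hqp h_int (measurable_innerψ hψ hψB φ) (abs_innerψ_le hψ hψB φ)).1
  have h2 : ∫ m, (inner ℝ φ (ψ m) : ℝ) ∂q = (inner ℝ φ (∫ m, ψ m ∂q) : ℝ) :=
    integral_inner (integrable_ψ hψ hψB q) φ
  have h3 : (inner ℝ φ ψt : ℝ) - (inner ℝ φ (∫ m, ψ m ∂q) : ℝ) ≤ ε * ‖φ‖ := by
    have : (inner ℝ φ ψt : ℝ) - (inner ℝ φ (∫ m, ψ m ∂q) : ℝ)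
        = (inner ℝ φ (ψt - ∫ m, ψ m ∂q) : ℝ) := by rw [inner_sub_right]
    rw [this]
    calc (inner ℝ φ (ψt - ∫ m, ψ m ∂q) : ℝ) ≤ ‖φ‖ * ‖ψt - ∫ m, ψ m ∂q‖ :=
          real_inner_le_norm _ _
    _ ≤ ‖φ‖ * ε := by
          refine mul_le_mul_of_nonneg_left ?_ (norm_nonneg φ)
          rwa [norm_sub_rev]
    _ = ε * ‖φ‖ := mul_comm _ _
  rw [h2] at h1
  unfold dualFn
  linarith

lemma continuous_dualFn (ψt : EuclideanSpace ℝ (Fin T)) (ε : ℝ) :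
    Continuous (dualFn p ψ ψt ε) := by
  have hB : 0 ≤ B := by
    haveI : NeZero p := ⟨IsProbabilityMeasure.ne_zero p⟩
    exact (norm_nonneg (ψ (MeasureTheory.Measure.nonempty_of_neZero p).some)).trans
      (hψB _)
  have hZcont : Continuous (fun φ : EuclideanSpace ℝ (Fin T) =>
      ∫ m, Real.exp ((inner ℝ φ (ψ m) : ℝ)) ∂p) := by
    rw [continuous_iff_continuousAt]
    intro φ₀
    apply continuousAt_of_dominated (bound := fun _ => Real.exp ((‖φ₀‖ + 1) * B))
    · exact Filter.Eventually.of_forall fun φ =>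
        (Real.continuous_exp.comp_aestronglyMeasurable
          (measurable_innerψ hψ hψB φ).aestronglyMeasurable)
    · have hball : Metric.ball φ₀ 1 ∈ nhds φ₀ := Metric.ball_mem_nhds _ one_pos
      filter_upwards [hball] with φ hφ
      refine ae_of_all _ fun m => ?_
      rw [Real.norm_eq_abs, abs_of_pos (Real.exp_pos _)]
      apply Real.exp_le_exp.mpr
      have h1 : (inner ℝ φ (ψ m) : ℝ) ≤ ‖φ‖ * B :=
        (le_abs_self _).trans (abs_innerψ_le hψ hψB φ m)
      have h2 : ‖φ‖ ≤ ‖φ₀‖ + 1 := by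
        have := mem_ball_iff_norm.mp hφ
        have := norm_sub_norm_le φ φ₀
        linarith
      nlinarith [norm_nonneg φ]
    · exact integrable_const _
    · exact ae_of_all _ fun m =>
        (Real.continuous_exp.comp ((continuous_id.inner continuous_const))).continuousAt
  have hlog : Continuous (fun φ : EuclideanSpace ℝ (Fin T) =>
      Real.log (∫ m, Real.exp ((inner ℝ φ (ψ m) : ℝ)) ∂p)) := by
    exact hZcont.log fun φ => (Z_pos hψ hψB φ).ne'
  unfold dualFn
  exact ((continuous_id.inner continuous_const).sub hlog).sub
    (continuous_const.mul continuous_norm)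

omit hψ hψB in
lemma slope_bound {L : ℝ → ℝ} {D c : ℝ} (hL : HasDerivAt L D 0)
    (h : ∀ t ∈ Set.Ioo (0:ℝ) 1, c * t ≤ L t - L 0) : c ≤ D := by
  have h1 := hasDerivAt_iff_tendsto_slope.mp hL
  have h2 : Filter.Tendsto (slope L 0) (nhdsWithin 0 (Set.Ioi 0)) (nhds D) :=
    h1.mono_left (nhdsWithin_mono 0 (fun t ht => by simpa using (ne_of_gt ht)))
  refine ge_of_tendsto h2 ?_
  have hmem : Set.Ioo (0:ℝ) 1 ∈ nhdsWithin 0 (Set.Ioi 0) :=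
    Ioo_mem_nhdsGT_of_mem (by constructor <;> norm_num)
  filter_upwards [hmem] with t ht
  have h3 := h t ht
  have h4 : c ≤ (L t - L 0) / t := (le_div_iff₀ ht.1).mpr (by linarith)
  simpa [slope_def_field, sub_zero] using h4

lemma hasDerivAt_logZ (φhat v : EuclideanSpace ℝ (Fin T)) :
    HasDerivAt
      (fun t : ℝ => Real.log (∫ m, Real.exp ((inner ℝ (φhat + t • v) (ψ m) : ℝ)) ∂p))
      ((∫ m, Real.exp ((inner ℝ φhat (ψ m) : ℝ)) * (inner ℝ v (ψ m) : ℝ) ∂p)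
        / (∫ m, Real.exp ((inner ℝ φhat (ψ m) : ℝ)) ∂p)) 0 := by
  haveI : NeZero p := ⟨IsProbabilityMeasure.ne_zero p⟩
  set f : M → ℝ := fun m => (inner ℝ φhat (ψ m) : ℝ) with hf
  set b : M → ℝ := fun m => (inner ℝ v (ψ m) : ℝ) with hb
  have hfm : Measurable f := (innerSL ℝ φhat).continuous.measurable.comp hψ
  have hbm : Measurable b := (innerSL ℝ v).continuous.measurable.comp hψ
  set C : ℝ := ‖φhat‖ * B + ‖v‖ * B with hC
  have habs : ∀ t : ℝ, |t| ≤ 1 → ∀ m, |f m + t * b m| ≤ C := by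
    intro t ht m
    have h1 : |f m| ≤ ‖φhat‖ * B := (abs_real_inner_le_norm φhat (ψ m)).trans
      (mul_le_mul_of_nonneg_left (hψB m) (norm_nonneg _))
    have h2 : |b m| ≤ ‖v‖ * B := (abs_real_inner_le_norm v (ψ m)).trans
      (mul_le_mul_of_nonneg_left (hψB m) (norm_nonneg _))
    calc |f m + t * b m| ≤ |f m| + |t * b m| := abs_add_le _ _
    _ ≤ ‖φhat‖ * B + |t| * |b m| := by rw [abs_mul]; gcongr
    _ ≤ ‖φhat‖ * B + 1 * (‖v‖ * B) := by
        have := mul_le_mul ht h2 (abs_nonneg _) zero_le_one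
        linarith
    _ = C := by ring
  set F : ℝ → M → ℝ := fun t m => Real.exp (f m + t * b m) with hF
  set F' : ℝ → M → ℝ := fun t m => Real.exp (f m + t * b m) * b m with hF'
  have hrw : ∀ t : ℝ, (fun m => Real.exp ((inner ℝ (φhat + t • v) (ψ m) : ℝ))) = F t := by
    intro t
    funext m
    simp only [hF, hf, hb, inner_add_left, real_inner_smul_left]
  have key := hasDerivAt_integral_of_dominated_loc_of_deriv_le (𝕜 := ℝ) (μ := p)
    (F := F) (F' := F') (x₀ := 0)
    (bound := fun _ => Real.exp C * (‖v‖ * B)) (Metric.ball_mem_nhds 0 one_pos)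
    (Filter.Eventually.of_forall fun t =>
      (Real.measurable_exp.comp ((hfm.add ((measurable_const).mul hbm)))).aestronglyMeasurable)
    (by
      refine Integrable.mono' (integrable_const (Real.exp C)) ?_ (ae_of_all _ fun m => ?_)
      · exact (Real.measurable_exp.comp
          ((hfm.add ((measurable_const).mul hbm)))).aestronglyMeasurable
      · rw [Real.norm_eq_abs, abs_of_pos (Real.exp_pos _)]
        exact Real.exp_le_exp.mpr ((abs_le.mp (habs 0 (by norm_num) m)).2))
    ((Real.measurable_exp.comp
        ((hfm.add ((measurable_const).mul hbm)))).mul hbm).aestronglyMeasurable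
    (ae_of_all _ fun m t ht => by
      have h2 : |b m| ≤ ‖v‖ * B := (abs_real_inner_le_norm v (ψ m)).trans
        (mul_le_mul_of_nonneg_left (hψB m) (norm_nonneg _))
      have ht1 : |t| ≤ 1 := le_of_lt (by simpa [Real.norm_eq_abs, Metric.mem_ball, dist_zero_right] using ht)
      rw [Real.norm_eq_abs, abs_mul, abs_of_pos (Real.exp_pos _)]
      have := Real.exp_le_exp.mpr ((abs_le.mp (habs t ht1 m)).2)
      exact mul_le_mul this h2 (abs_nonneg _) (le_of_lt (Real.exp_pos _)))
    (integrable_const _)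
    (ae_of_all _ fun m t ht => by
      have : HasDerivAt (fun s : ℝ => f m + s * b m) (b m) t :=
        ((hasDerivAt_mul_const (b m)).const_add (f m))
      exact this.exp)
  obtain ⟨hint, hZ⟩ := key
  have hZpos : 0 < ∫ m, F 0 m ∂p := by
    refine integral_exp_pos ?_
    refine Integrable.mono' (integrable_const (Real.exp C)) ?_ (ae_of_all _ fun m => ?_)
    · exact (Real.measurable_exp.comp
        ((hfm.add ((measurable_const).mul hbm)))).aestronglyMeasurable
    · rw [Real.norm_eq_abs, abs_of_pos (Real.exp_pos _)]
      exact Real.exp_le_exp.mpr ((abs_le.mp (habs 0 (by norm_num) m)).2)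
  have hlog := hZ.log hZpos.ne'
  have heqfun : (fun t : ℝ => Real.log (∫ m, Real.exp ((inner ℝ (φhat + t • v) (ψ m) : ℝ)) ∂p))
      = fun t : ℝ => Real.log (∫ m, F t m ∂p) := by
    funext t; rw [hrw t]
  rw [heqfun]
  convert hlog using 1
  have h0 : (fun m => F' 0 m) = fun m => Real.exp (f m) * b m := by
    funext m; simp [hF']
  have h1 : (fun m => F 0 m) = fun m => Real.exp (f m) := by
    funext m; simp [hF]
  rw [h0, h1]
lemma exists_maximizer {ψt : EuclideanSpace ℝ (Fin T)} {ε : ℝ} (hε : 0 < ε)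
    {q₀ : Measure M} [IsProbabilityMeasure q₀] (hq₀p : q₀ ≪ p)
    (h_int₀ : Integrable (llr q₀ p) q₀)
    (hslater : ‖(∫ m, ψ m ∂q₀) - ψt‖ < ε) :
    ∃ φhat, ∀ φ, dualFn p ψ ψt ε φ ≤ dualFn p ψ ψt ε φhat := by
  set μ₀ := ∫ m, ψ m ∂q₀ with hμ₀
  set δ := ‖μ₀ - ψt‖ with hδ
  set K₀ := ∫ x, llr q₀ p x ∂q₀ with hK₀
  have hδε : δ < ε := hslater
  have hδ0 : 0 ≤ δ := norm_nonneg _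
  have hcoer : ∀ φ, dualFn p ψ ψt ε φ ≤ K₀ - ‖φ‖ * (ε - δ) := by
    intro φ
    have h1 := (gibbs_ineq hq₀p h_int₀ (measurable_innerψ hψ hψB φ)
      (abs_innerψ_le hψ hψB φ)).1
    have h2eq : ∫ m, (inner ℝ φ (ψ m) : ℝ) ∂q₀ = (inner ℝ φ μ₀ : ℝ) :=
      integral_inner (integrable_ψ hψ hψB q₀) φ
    rw [h2eq] at h1
    have h2 : (inner ℝ φ ψt : ℝ) - (inner ℝ φ μ₀ : ℝ) ≤ ‖φ‖ * δ := by
      have : (inner ℝ φ ψt : ℝ) - (inner ℝ φ μ₀ : ℝ) = (inner ℝ φ (ψt - μ₀) : ℝ) := by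
        rw [inner_sub_right]
      rw [this]
      calc (inner ℝ φ (ψt - μ₀) : ℝ) ≤ ‖φ‖ * ‖ψt - μ₀‖ := real_inner_le_norm _ _
      _ = ‖φ‖ * δ := by rw [hδ, norm_sub_rev]
    unfold dualFn
    have h3 : (0:ℝ) ≤ ‖φ‖ := norm_nonneg _
    nlinarith
  set R : ℝ := max 1 ((K₀ - dualFn p ψ ψt ε 0) / (ε - δ)) with hR
  have hR1 : (1:ℝ) ≤ R := le_max_left _ _
  have hR0 : (0:ℝ) ≤ R := by linarith
  obtain ⟨φhat, hmem, hmax⟩ := (isCompact_closedBall (0 : EuclideanSpace ℝ (Fin T)) R).exists_isMaxOn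
    ⟨0, Metric.mem_closedBall_self hR0⟩ ((continuous_dualFn (p := p) hψ hψB ψt ε).continuousOn)
  refine ⟨φhat, fun φ => ?_⟩
  by_cases hcase : ‖φ‖ ≤ R
  · exact hmax (by simpa [Metric.mem_closedBall, dist_zero_right] using hcase)
  · push_neg at hcase
    have h0mem : (0 : EuclideanSpace ℝ (Fin T)) ∈ Metric.closedBall (0 : EuclideanSpace ℝ (Fin T)) R :=
      Metric.mem_closedBall_self hR0
    have h5 : K₀ - dualFn p ψ ψt ε 0 ≤ R * (ε - δ) := by
      have := le_max_right 1 ((K₀ - dualFn p ψ ψt ε 0) / (ε - δ))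
      rw [div_le_iff₀ (by linarith)] at this
      linarith [this]
    have h6 : R * (ε - δ) < ‖φ‖ * (ε - δ) := by
      apply mul_lt_mul_of_pos_right hcase (by linarith)
    refine le_of_lt ?_
    calc dualFn p ψ ψt ε φ ≤ K₀ - ‖φ‖ * (ε - δ) := hcoer φ
    _ < K₀ - R * (ε - δ) := by linarith
    _ ≤ dualFn p ψ ψt ε 0 := by linarith
    _ ≤ dualFn p ψ ψt ε φhat := hmax h0mem


lemma maximizer_props {ψt : EuclideanSpace ℝ (Fin T)} {ε : ℝ} (hε : 0 < ε)
    {φhat : EuclideanSpace ℝ (Fin T)}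
    (hmax : ∀ φ, dualFn p ψ ψt ε φ ≤ dualFn p ψ ψt ε φhat) :
    IsProbabilityMeasure (p.tilted (fun m => (inner ℝ φhat (ψ m) : ℝ))) ∧
    p.tilted (fun m => (inner ℝ φhat (ψ m) : ℝ)) ≪ p ∧
    Integrable (llr (p.tilted (fun m => (inner ℝ φhat (ψ m) : ℝ))) p)
      (p.tilted (fun m => (inner ℝ φhat (ψ m) : ℝ))) ∧
    ‖(∫ m, ψ m ∂(p.tilted (fun m => (inner ℝ φhat (ψ m) : ℝ)))) - ψt‖ ≤ ε ∧
    ∫ x, llr (p.tilted (fun m => (inner ℝ φhat (ψ m) : ℝ))) p x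
        ∂(p.tilted (fun m => (inner ℝ φhat (ψ m) : ℝ)))
      = dualFn p ψ ψt ε φhat := by
  haveI : NeZero p := ⟨IsProbabilityMeasure.ne_zero p⟩
  set f : M → ℝ := fun m => (inner ℝ φhat (ψ m) : ℝ) with hfdef
  have hfm : Measurable f := measurable_innerψ hψ hψB φhat
  have hexp : Integrable (fun m => Real.exp (f m)) p := integrable_exp_innerψ hψ hψB φhat
  have hZpos : 0 < ∫ m, Real.exp (f m) ∂p := Z_pos hψ hψB φhat
  haveI hprob : IsProbabilityMeasure (p.tilted f) := isProbabilityMeasure_tilted hexp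
  have hac : p.tilted f ≪ p := tilted_absolutelyContinuous p f
  set Z : ℝ := ∫ m, Real.exp (f m) ∂p with hZdef
  have hllr_ae : llr (p.tilted f) p =ᵐ[p] fun x => f x - Real.log Z :=
    log_rnDeriv_tilted_left_self hexp
  have hllr_ae_q : llr (p.tilted f) p =ᵐ[p.tilted f] fun x => f x - Real.log Z :=
    hac.ae_le hllr_ae
  have h_int : Integrable (llr (p.tilted f) p) (p.tilted f) := by
    refine (integrable_of_bounded (q := p.tilted f)
      ((hfm.sub measurable_const).aestronglyMeasurable)
      (C := ‖φhat‖ * B + |Real.log Z|) ?_).congr hllr_ae_q.symm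
    intro m
    calc |f m - Real.log Z| ≤ |f m| + |Real.log Z| := abs_sub _ _
    _ ≤ ‖φhat‖ * B + |Real.log Z| := by
        have := abs_innerψ_le hψ hψB φhat m
        linarith
  set μh : EuclideanSpace ℝ (Fin T) := ∫ m, ψ m ∂(p.tilted f) with hμh
  -- identify the derivative with the inner product against μh
  have hD : ∀ v : EuclideanSpace ℝ (Fin T),
      HasDerivAt (fun t : ℝ => Real.log (∫ m, Real.exp ((inner ℝ (φhat + t • v) (ψ m) : ℝ)) ∂p))
        ((inner ℝ v μh : ℝ)) 0 := by
    intro v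
    have h1 := hasDerivAt_logZ (p := p) hψ hψB φhat v
    have h2 : ∫ m, (inner ℝ v (ψ m) : ℝ) ∂(p.tilted f) = (inner ℝ v μh : ℝ) :=
      integral_inner (integrable_ψ hψ hψB (p.tilted f)) v
    have h3 : ∫ m, (inner ℝ v (ψ m) : ℝ) ∂(p.tilted f)
        = (∫ m, Real.exp (f m) * (inner ℝ v (ψ m) : ℝ) ∂p) / Z := by
      rw [integral_tilted]
      rw [← integral_div]
      congr 1
      funext m
      rw [smul_eq_mul]
      field_simp
      rw [← hZdef, mul_div_assoc, div_self hZpos.ne', mul_one]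
    rw [← h2, h3] at *
    exact h1
  have key1 : ∀ v : EuclideanSpace ℝ (Fin T),
      (inner ℝ v ψt : ℝ) - ε * ‖v‖ ≤ (inner ℝ v μh : ℝ) := by
    intro v
    refine slope_bound (hD v) ?_
    intro t ht
    have hmax' := hmax (φhat + t • v)
    unfold dualFn at hmax'
    have e1 : (inner ℝ (φhat + t • v) ψt : ℝ) = (inner ℝ φhat ψt : ℝ) + t * (inner ℝ v ψt : ℝ) := by
      rw [inner_add_left, real_inner_smul_left]
    have e2 : ‖φhat + t • v‖ ≤ ‖φhat‖ + t * ‖v‖ := by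
      calc ‖φhat + t • v‖ ≤ ‖φhat‖ + ‖t • v‖ := norm_add_le _ _
      _ = ‖φhat‖ + t * ‖v‖ := by
          rw [norm_smul, Real.norm_eq_abs, abs_of_pos ht.1]
    rw [e1] at hmax'
    have e3 : ε * ‖φhat + t • v‖ ≤ ε * (‖φhat‖ + t * ‖v‖) :=
      mul_le_mul_of_nonneg_left e2 (le_of_lt hε)
    have e4 : (fun t : ℝ =>
        Real.log (∫ m, Real.exp ((inner ℝ (φhat + t • v) (ψ m) : ℝ)) ∂p)) 0
        = Real.log (∫ m, Real.exp ((inner ℝ φhat (ψ m) : ℝ)) ∂p) := by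
      norm_num
    simp only [e4]
    nlinarith [hmax', e3]
  have key1' : ∀ v : EuclideanSpace ℝ (Fin T),
      (inner ℝ v (ψt - μh) : ℝ) ≤ ε * ‖v‖ := by
    intro v
    have := key1 v
    rw [inner_sub_right]
    linarith
  have feas : ‖μh - ψt‖ ≤ ε := by
    have h := key1' (ψt - μh)
    rw [real_inner_self_eq_norm_mul_norm] at h
    rw [norm_sub_rev]
    rcases eq_or_lt_of_le (norm_nonneg (ψt - μh)) with h0 | h0
    · rw [← h0]; exact le_of_lt hε
    · exact le_of_mul_le_mul_right (by linarith [h]) h0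
  have key2 : (inner ℝ φhat μh : ℝ) ≤ (inner ℝ φhat ψt : ℝ) - ε * ‖φhat‖ := by
    have h := slope_bound (hD (-φhat)) (c := -(inner ℝ φhat ψt : ℝ) + ε * ‖φhat‖) ?_
    · rw [inner_neg_left] at h
      linarith
    · intro t ht
      have hmax' := hmax (φhat + t • (-φhat))
      unfold dualFn at hmax'
      have e0 : φhat + t • (-φhat) = (1 - t) • φhat := by
        rw [smul_neg, sub_smul, one_smul]
        abel
      have e1 : (inner ℝ (φhat + t • (-φhat)) ψt : ℝ) = (1 - t) * (inner ℝ φhat ψt : ℝ) := by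
        rw [e0, real_inner_smul_left]
      have e2 : ‖φhat + t • (-φhat)‖ = (1 - t) * ‖φhat‖ := by
        rw [e0, norm_smul, Real.norm_eq_abs, abs_of_pos (by linarith [ht.2] : (0:ℝ) < 1 - t)]
      rw [e1, e2] at hmax'
      have e4 : (fun s : ℝ =>
          Real.log (∫ m, Real.exp ((inner ℝ (φhat + s • (-φhat)) (ψ m) : ℝ)) ∂p)) 0
          = Real.log (∫ m, Real.exp ((inner ℝ φhat (ψ m) : ℝ)) ∂p) := by
        norm_num
      simp only [e4]
      nlinarith [hmax']
  have tight : (inner ℝ φhat μh : ℝ) = (inner ℝ φhat ψt : ℝ) - ε * ‖φhat‖ := by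
    have h := key1 φhat
    linarith
  refine ⟨hprob, hac, h_int, feas, ?_⟩
  have hval : ∫ x, llr (p.tilted f) p x ∂(p.tilted f)
      = (∫ m, f m ∂(p.tilted f)) - Real.log Z := by
    rw [integral_congr_ae hllr_ae_q]
    rw [integral_sub (integrable_of_bounded hfm.aestronglyMeasurable
        (abs_innerψ_le hψ hψB φhat)) (integrable_const _)]
    simp
  have hfint : ∫ m, f m ∂(p.tilted f) = (inner ℝ φhat μh : ℝ) :=
    integral_inner (integrable_ψ hψ hψB (p.tilted f)) φhat
  rw [hval, hfint, tight]
  unfold dualFn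
  ring

end Main

/-- Lemma 5 of the paper (KL-divergence minimization with relaxed moment-matching
constraints, specialized to `B = ℝ^T` with the self-dual Euclidean norm). Under a
Slater-type qualification, the infimum of `KL(q‖p)` over probability measures `q ≪ p`
with `‖∫ ψ dq − ψ̃‖ ≤ ε` equals
`sup_φ (⟨φ, ψ̃⟩ − log ∫ exp ⟨φ,ψ⟩ dp − ε‖φ‖)`, and if `φ̂` attains the supremum then the
unique primal minimizer is the Gibbs measure `q̂` with density `exp(⟨φ̂,ψ⟩ − Λ_{φ̂})`
with respect to `p`, where `Λ_{φ̂} = log ∫ exp ⟨φ̂,ψ⟩ dp`. -/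
theorem stmt17 {M : Type*} [MeasurableSpace M] (p : Measure M) [IsProbabilityMeasure p]
    (T : ℕ) (hT : 1 ≤ T)
    (ψ : M → EuclideanSpace ℝ (Fin T)) (hψ : Measurable ψ)
    (B : ℝ) (hψB : ∀ m, ‖ψ m‖ ≤ B)
    (ψt : EuclideanSpace ℝ (Fin T)) (ε : ℝ) (hε : 0 < ε)
    (slater : ∃ q₀ : Measure M, IsProbabilityMeasure q₀ ∧ q₀ ≪ p ∧
        Integrable (fun m => Real.log ((q₀.rnDeriv p) m).toReal) q₀ ∧
        ‖(∫ m, ψ m ∂q₀) - ψt‖ < ε) :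
    (sInf {r : ℝ | ∃ q : Measure M, IsProbabilityMeasure q ∧ q ≪ p ∧
          Integrable (fun m => Real.log ((q.rnDeriv p) m).toReal) q ∧
          ‖(∫ m, ψ m ∂q) - ψt‖ ≤ ε ∧ r = klDivR q p}
      = ⨆ φ : EuclideanSpace ℝ (Fin T),
          ((inner ℝ φ ψt : ℝ) - Real.log (∫ m, Real.exp ((inner ℝ φ (ψ m) : ℝ)) ∂p)
            - ε * ‖φ‖)) ∧
    (∀ φhat : EuclideanSpace ℝ (Fin T),
      (∀ φ : EuclideanSpace ℝ (Fin T),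
        (inner ℝ φ ψt : ℝ) - Real.log (∫ m, Real.exp ((inner ℝ φ (ψ m) : ℝ)) ∂p) - ε * ‖φ‖
          ≤ (inner ℝ φhat ψt : ℝ)
            - Real.log (∫ m, Real.exp ((inner ℝ φhat (ψ m) : ℝ)) ∂p) - ε * ‖φhat‖) →
      ∀ qhat : Measure M,
        qhat = p.withDensity (fun m => ENNReal.ofReal (Real.exp
            ((inner ℝ φhat (ψ m) : ℝ)
              - Real.log (∫ m', Real.exp ((inner ℝ φhat (ψ m') : ℝ)) ∂p)))) →
        (IsProbabilityMeasure qhat ∧ qhat ≪ p ∧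
          Integrable (fun m => Real.log ((qhat.rnDeriv p) m).toReal) qhat ∧
          ‖(∫ m, ψ m ∂qhat) - ψt‖ ≤ ε) ∧
        klDivR qhat p
          = sInf {r : ℝ | ∃ q : Measure M, IsProbabilityMeasure q ∧ q ≪ p ∧
              Integrable (fun m => Real.log ((q.rnDeriv p) m).toReal) q ∧
              ‖(∫ m, ψ m ∂q) - ψt‖ ≤ ε ∧ r = klDivR q p} ∧
        (∀ q : Measure M, IsProbabilityMeasure q → q ≪ p →
          Integrable (fun m => Real.log ((q.rnDeriv p) m).toReal) q →
          ‖(∫ m, ψ m ∂q) - ψt‖ ≤ ε →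
          klDivR q p = klDivR qhat p → q = qhat)) := by
  haveI : NeZero p := ⟨IsProbabilityMeasure.ne_zero p⟩
  obtain ⟨q₀, hq₀prob, hq₀p, hq₀int, hq₀slater⟩ := slater
  haveI := hq₀prob
  have hq₀int' : Integrable (llr q₀ p) q₀ := hq₀int
  obtain ⟨φhat₀, hmax₀⟩ := exists_maximizer hψ hψB hε hq₀p hq₀int' hq₀slater
  have hlb : ∀ r ∈ {r : ℝ | ∃ q : Measure M, IsProbabilityMeasure q ∧ q ≪ p ∧
      Integrable (fun m => Real.log ((q.rnDeriv p) m).toReal) q ∧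
      ‖(∫ m, ψ m ∂q) - ψt‖ ≤ ε ∧ r = klDivR q p},
      ∀ φ, dualFn p ψ ψt ε φ ≤ r := by
    rintro r ⟨q, hqprob, hqp, hqint, hqfeas, rfl⟩ φ
    haveI := hqprob
    exact weak_duality hψ hψB (le_of_lt hε) hqp hqint hqfeas φ
  have master : ∀ φh : EuclideanSpace ℝ (Fin T),
      (∀ φ, dualFn p ψ ψt ε φ ≤ dualFn p ψ ψt ε φh) →
      sInf {r : ℝ | ∃ q : Measure M, IsProbabilityMeasure q ∧ q ≪ p ∧
          Integrable (fun m => Real.log ((q.rnDeriv p) m).toReal) q ∧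
          ‖(∫ m, ψ m ∂q) - ψt‖ ≤ ε ∧ r = klDivR q p} = dualFn p ψ ψt ε φh := by
    intro φh hm
    obtain ⟨hprob, hac, hint, hfeas, hval⟩ := maximizer_props hψ hψB hε hm
    have hmem : dualFn p ψ ψt ε φh ∈ {r : ℝ | ∃ q : Measure M, IsProbabilityMeasure q ∧ q ≪ p ∧
        Integrable (fun m => Real.log ((q.rnDeriv p) m).toReal) q ∧
        ‖(∫ m, ψ m ∂q) - ψt‖ ≤ ε ∧ r = klDivR q p} :=
      ⟨p.tilted (fun m => (inner ℝ φh (ψ m) : ℝ)), hprob, hac, hint, hfeas, hval.symm⟩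
    refine le_antisymm (csInf_le ⟨dualFn p ψ ψt ε 0, fun r hr => hlb r hr 0⟩ hmem)
      (le_csInf ⟨_, hmem⟩ (fun r hr => hlb r hr φh))
  constructor
  · have hsup : (⨆ φ : EuclideanSpace ℝ (Fin T),
        ((inner ℝ φ ψt : ℝ) - Real.log (∫ m, Real.exp ((inner ℝ φ (ψ m) : ℝ)) ∂p)
          - ε * ‖φ‖)) = dualFn p ψ ψt ε φhat₀ := by
      refine le_antisymm (ciSup_le fun φ => hmax₀ φ) ?_
      exact le_ciSup (f := fun φ : EuclideanSpace ℝ (Fin T) =>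
        ((inner ℝ φ ψt : ℝ) - Real.log (∫ m, Real.exp ((inner ℝ φ (ψ m) : ℝ)) ∂p) - ε * ‖φ‖))
        ⟨dualFn p ψ ψt ε φhat₀, by rintro r ⟨φ, rfl⟩; exact hmax₀ φ⟩ φhat₀
    rw [hsup]
    exact master φhat₀ hmax₀
  · intro φhat hmaxS qhat hqhat_eq
    have hmax : ∀ φ, dualFn p ψ ψt ε φ ≤ dualFn p ψ ψt ε φhat := fun φ => hmaxS φ
    obtain ⟨hprob, hac, hint, hfeas, hval⟩ := maximizer_props hψ hψB hε hmax
    have hqt' : qhat = p.tilted (fun m => (inner ℝ φhat (ψ m) : ℝ)) := by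
      rw [hqhat_eq, Measure.tilted]
      congr 1
      funext m
      rw [Real.exp_sub, Real.exp_log (Z_pos hψ hψB φhat)]
    rw [hqt']
    refine ⟨⟨hprob, hac, hint, hfeas⟩, ?_, ?_⟩
    · rw [master φhat hmax]
      exact hval
    · intro q hqprob hqp hqint hqfeas hkl
      haveI := hqprob
      have hqint' : Integrable (llr q p) q := hqint
      have hgibbs := gibbs_ineq hqp hqint' (measurable_innerψ hψ hψB φhat)
        (abs_innerψ_le hψ hψB φhat)
      have h2 : ∫ m, (inner ℝ φhat (ψ m) : ℝ) ∂q = (inner ℝ φhat (∫ m, ψ m ∂q) : ℝ) :=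
        integral_inner (integrable_ψ hψ hψB q) φhat
      have h3 : (inner ℝ φhat ψt : ℝ) - (inner ℝ φhat (∫ m, ψ m ∂q) : ℝ) ≤ ε * ‖φhat‖ := by
        have e : (inner ℝ φhat ψt : ℝ) - (inner ℝ φhat (∫ m, ψ m ∂q) : ℝ)
            = (inner ℝ φhat (ψt - ∫ m, ψ m ∂q) : ℝ) := by rw [inner_sub_right]
        rw [e]
        calc (inner ℝ φhat (ψt - ∫ m, ψ m ∂q) : ℝ) ≤ ‖φhat‖ * ‖ψt - ∫ m, ψ m ∂q‖ :=
              real_inner_le_norm _ _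
        _ ≤ ‖φhat‖ * ε := by
              refine mul_le_mul_of_nonneg_left ?_ (norm_nonneg _)
              rwa [norm_sub_rev]
        _ = ε * ‖φhat‖ := mul_comm _ _
      have hklval : ∫ x, llr q p x ∂q = dualFn p ψ ψt ε φhat := by
        have : klDivR q p = klDivR (p.tilted (fun m => (inner ℝ φhat (ψ m) : ℝ))) p := by
          exact hkl
        rw [show klDivR (p.tilted (fun m => (inner ℝ φhat (ψ m) : ℝ))) p
            = ∫ x, llr (p.tilted (fun m => (inner ℝ φhat (ψ m) : ℝ))) p x
                ∂(p.tilted (fun m => (inner ℝ φhat (ψ m) : ℝ))) from rfl, hval] at this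
        exact this
      have heq : ∫ x, llr q p x ∂q
          = (∫ m, (inner ℝ φhat (ψ m) : ℝ) ∂q)
            - Real.log (∫ m, Real.exp ((inner ℝ φhat (ψ m) : ℝ)) ∂p) := by
        have hle := hgibbs.1
        rw [h2] at hle ⊢
        rw [hklval] at hle ⊢
        unfold dualFn
        unfold dualFn at hle
        linarith
      exact hgibbs.2 heq
end
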